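/- Let v ≥ 4 and let T(v) be the triangular graph, i.e., the line graph of the complete graph K_v (vertices are the 2-element subsets of a v-element set, adjacent iff they intersect). Then cp(T(v)) = v, and moreover cp^{(v-1)}(T(v)) = v: the cliques Q_i = {pairs containing i}, for i = 1, …, v, form a minimum clique partition. -/

import Mathlib

open Finset SimpleGraph Polynomial

variable {V : Type*}

/-- A clique partition of `G`: a set of cliques of `G` such that every edge of `G`
lies in exactly one of them. -/
def IsCliquePartition [DecidableEq V] (G : SimpleGraph V) (P : Finset (Finset V)) : Prop :=
  (∀ s ∈ P, G.IsClique (s : Set V)) ∧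
    ∀ u v : V, G.Adj u v → ∃! s, s ∈ P ∧ u ∈ s ∧ v ∈ s

/-- The spectral radius of a finite graph: the largest eigenvalue of its adjacency matrix. -/
noncomputable def specRad [Fintype V] [DecidableEq V] (G : SimpleGraph V)
    [DecidableRel G.Adj] : ℝ :=
  sSup {μ : ℝ | Module.End.HasEigenvalue (Matrix.toLin' (G.adjMatrix ℝ)) μ}

/-- `cpT G t` : the minimum number of cliques in a clique partition of `G` in which
every clique has at most `t` vertices. -/
noncomputable def cpT [DecidableEq V] (G : SimpleGraph V) (t : ℕ) : ℕ :=
  sInf {m | ∃ P : Finset (Finset V),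
    IsCliquePartition G P ∧ (∀ s ∈ P, s.card ≤ t) ∧ P.card = m}

/-- `cp G` : the clique partition number of `G`. -/
noncomputable def cp [DecidableEq V] (G : SimpleGraph V) : ℕ :=
  sInf {m | ∃ P : Finset (Finset V), IsCliquePartition G P ∧ P.card = m}

/-- The triangular graph `T(v)`: the line graph of `K_v`, i.e. vertices are the
`2`-element subsets of a `v`-element set, adjacent iff they intersect. -/
def triangularGraph (v : ℕ) : SimpleGraph {s : Finset (Fin v) // s.card = 2} where
  Adj a b := a ≠ b ∧ ((a : Finset (Fin v)) ∩ (b : Finset (Fin v))).Nonempty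
  symm := by
    constructor
    rintro a b ⟨h₁, h₂⟩
    exact ⟨h₁.symm, by rwa [Finset.inter_comm]⟩
  loopless := by
    constructor
    rintro a ⟨h, -⟩
    exact h rfl

/-- helper: a 2-element set containing `x` is `{x,y}` for some `y ≠ x`. -/
lemma pair_decomp {α : Type*} [DecidableEq α] {a : Finset α} (ha : a.card = 2) {x : α}
    (hx : x ∈ a) : ∃ y, y ≠ x ∧ a = {x, y} := by
  obtain ⟨p, q, hpq, rfl⟩ := Finset.card_eq_two.mp ha
  rcases Finset.mem_insert.mp hx with rfl | hq
  · exact ⟨q, hpq.symm, rfl⟩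
  · rw [Finset.mem_singleton] at hq
    subst hq
    exact ⟨p, hpq, Finset.pair_comm p x⟩

lemma offDiag_card_eq {α : Type*} [DecidableEq α] (s : Finset α) :
    s.offDiag.card = s.card * (s.card - 1) := by
  rw [Finset.offDiag_card]
  cases h : s.card with
  | zero => simp
  | succ m => rw [Nat.succ_sub_one, Nat.mul_succ, Nat.add_sub_cancel]

lemma cliquePartition_sum_offDiag {V : Type*} [Fintype V] [DecidableEq V] (G : SimpleGraph V)
    {P₁ P₂ : Finset (Finset V)} (h₁ : IsCliquePartition G P₁) (h₂ : IsCliquePartition G P₂) :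
    ∑ s ∈ P₁, s.offDiag.card = ∑ s ∈ P₂, s.offDiag.card := by
  classical
  have disj : ∀ P : Finset (Finset V), IsCliquePartition G P →
      ∀ s ∈ P, ∀ t ∈ P, s ≠ t → Disjoint s.offDiag t.offDiag := by
    intro P hP s hs t ht hst
    rw [Finset.disjoint_left]
    rintro ⟨u, w⟩ hus hut
    rw [Finset.mem_offDiag] at hus hut
    have hadj : G.Adj u w :=
      hP.1 s hs (Finset.mem_coe.mpr hus.1) (Finset.mem_coe.mpr hus.2.1) hus.2.2
    obtain ⟨x, -, hxu⟩ := hP.2 u w hadj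
    exact hst ((hxu s ⟨hs, hus.1, hus.2.1⟩).trans (hxu t ⟨ht, hut.1, hut.2.1⟩).symm)
  have key : ∀ P : Finset (Finset V), IsCliquePartition G P →
      P.biUnion Finset.offDiag =
        Finset.univ.filter (fun p : V × V => G.Adj p.1 p.2) := by
    intro P hP
    ext ⟨u, w⟩
    simp only [Finset.mem_biUnion, Finset.mem_offDiag, Finset.mem_filter, Finset.mem_univ,
      true_and]
    constructor
    · rintro ⟨s, hs, hu, hw, huw⟩
      exact hP.1 s hs (Finset.mem_coe.mpr hu) (Finset.mem_coe.mpr hw) huw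
    · intro hadj
      obtain ⟨s, ⟨hs, hu, hw⟩, -⟩ := hP.2 u w hadj
      exact ⟨s, hs, hu, hw, hadj.ne⟩
  rw [← Finset.card_biUnion (disj _ h₁), ← Finset.card_biUnion (disj _ h₂),
    key _ h₁, key _ h₂]

lemma triangular_clique_card_le (v : ℕ) (hv : 4 ≤ v)
    (S : Finset {s : Finset (Fin v) // s.card = 2})
    (hS : (triangularGraph v).IsClique (S : Set _)) : S.card ≤ v - 1 := by
  classical
  by_contra hcon
  push_neg at hcon
  have h4 : 4 ≤ S.card := by omega
  by_cases hx : ∃ x : Fin v, ∀ a ∈ S, x ∈ (a : Finset (Fin v))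
  · obtain ⟨x, hxall⟩ := hx
    have hle : S.card ≤
        ((Finset.univ.erase x).image (fun y : Fin v => ({y} : Finset (Fin v)))).card := by
      refine Finset.card_le_card_of_injOn (fun a => (a : Finset (Fin v)).erase x) ?_ ?_
      · intro a ha
        have hmem := hxall a ha
        have hc : ((a : Finset (Fin v)).erase x).card = 1 := by
          rw [Finset.card_erase_of_mem hmem, a.2]
        obtain ⟨y, hy⟩ := Finset.card_eq_one.mp hc
        have hyx : y ≠ x := by
          have : y ∈ (a : Finset (Fin v)).erase x := by
            rw [hy]; exact Finset.mem_singleton_self y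
          exact Finset.ne_of_mem_erase this
        show ((a : Finset (Fin v)).erase x) ∈ _
        rw [hy]
        exact Finset.mem_image.mpr ⟨y, Finset.mem_erase.mpr ⟨hyx, Finset.mem_univ y⟩, rfl⟩
      · intro a ha b hb hab
        apply Subtype.ext
        rw [← Finset.insert_erase (hxall a ha), ← Finset.insert_erase (hxall b hb)]
        exact congrArg (insert x) hab
    rw [Finset.card_image_of_injective _ (fun y z h => Finset.singleton_injective h),
      Finset.card_erase_of_mem (Finset.mem_univ x), Finset.card_univ, Fintype.card_fin] at hle
    omega
  · push_neg at hx
    obtain ⟨a, ha, b, hb, hab⟩ := Finset.one_lt_card.mp (by omega : 1 < S.card)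
    obtain ⟨-, x, hxab⟩ := hS (Finset.mem_coe.mpr ha) (Finset.mem_coe.mpr hb) hab
    rw [Finset.mem_inter] at hxab
    obtain ⟨y, hyx, hay⟩ := pair_decomp a.2 hxab.1
    obtain ⟨z, hzx, hbz⟩ := pair_decomp b.2 hxab.2
    have hyz : y ≠ z := by
      intro h; subst h
      exact hab (Subtype.ext (hay.trans hbz.symm))
    obtain ⟨c, hc, hxc⟩ := hx x
    have hca : c ≠ a := fun h => hxc (h ▸ hxab.1)
    have hcb : c ≠ b := fun h => hxc (h ▸ hxab.2)
    -- y ∈ c and z ∈ c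
    have hyc : y ∈ (c : Finset (Fin v)) := by
      obtain ⟨-, u, hu⟩ := hS (Finset.mem_coe.mpr hc) (Finset.mem_coe.mpr ha) hca
      rw [Finset.mem_inter, hay] at hu
      rcases Finset.mem_insert.mp hu.2 with rfl | h2
      · exact absurd hu.1 hxc
      · exact (Finset.mem_singleton.mp h2) ▸ hu.1
    have hzc : z ∈ (c : Finset (Fin v)) := by
      obtain ⟨-, u, hu⟩ := hS (Finset.mem_coe.mpr hc) (Finset.mem_coe.mpr hb) hcb
      rw [Finset.mem_inter, hbz] at hu
      rcases Finset.mem_insert.mp hu.2 with rfl | h2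
      · exact absurd hu.1 hxc
      · exact (Finset.mem_singleton.mp h2) ▸ hu.1
    have hcyz : (c : Finset (Fin v)) = {y, z} := by
      refine (Finset.eq_of_subset_of_card_le ?_ ?_).symm
      · intro u hu
        rcases Finset.mem_insert.mp hu with rfl | h2
        · exact hyc
        · rw [Finset.mem_singleton.mp h2]; exact hzc
      · rw [c.2, Finset.card_pair hyz]
    have hsub : S ⊆ {a, b, c} := by
      intro d hd
      by_contra hd3
      simp only [Finset.mem_insert, Finset.mem_singleton, not_or] at hd3
      obtain ⟨hda, hdb, hdc⟩ := hd3
      by_cases hxd : x ∈ (d : Finset (Fin v))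
      · obtain ⟨w, hwx, hdw⟩ := pair_decomp d.2 hxd
        obtain ⟨-, u, hu⟩ := hS (Finset.mem_coe.mpr hd) (Finset.mem_coe.mpr hc) hdc
        rw [Finset.mem_inter, hdw, hcyz] at hu
        have hwu : u = w := by
          rcases Finset.mem_insert.mp hu.1 with rfl | h2
          · exfalso; apply hxc
            rw [← hcyz] at hu; exact hu.2
          · exact Finset.mem_singleton.mp h2
        subst hwu
        rcases Finset.mem_insert.mp hu.2 with rfl | h2
        · exact hda (Subtype.ext (hdw.trans hay.symm))
        · rw [Finset.mem_singleton.mp h2] at hdw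
          exact hdb (Subtype.ext (hdw.trans hbz.symm))
      · have hyd : y ∈ (d : Finset (Fin v)) := by
          obtain ⟨-, u, hu⟩ := hS (Finset.mem_coe.mpr hd) (Finset.mem_coe.mpr ha) hda
          rw [Finset.mem_inter, hay] at hu
          rcases Finset.mem_insert.mp hu.2 with rfl | h2
          · exact absurd hu.1 hxd
          · exact (Finset.mem_singleton.mp h2) ▸ hu.1
        have hzd : z ∈ (d : Finset (Fin v)) := by
          obtain ⟨-, u, hu⟩ := hS (Finset.mem_coe.mpr hd) (Finset.mem_coe.mpr hb) hdb
          rw [Finset.mem_inter, hbz] at hu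
          rcases Finset.mem_insert.mp hu.2 with rfl | h2
          · exact absurd hu.1 hxd
          · exact (Finset.mem_singleton.mp h2) ▸ hu.1
        apply hdc
        apply Subtype.ext
        rw [hcyz]
        refine (Finset.eq_of_subset_of_card_le ?_ ?_).symm
        · intro u hu
          rcases Finset.mem_insert.mp hu with rfl | h2
          · exact hyd
          · rw [Finset.mem_singleton.mp h2]; exact hzd
        · rw [d.2, Finset.card_pair hyz]
    have h3 : ({a, b, c} : Finset {s : Finset (Fin v) // s.card = 2}).card ≤ 3 := by
      apply (Finset.card_insert_le _ _).trans
      apply Nat.succ_le_succ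
      apply (Finset.card_insert_le _ _).trans
      simp
    have := (Finset.card_le_card hsub).trans h3
    omega

/-- For `v ≥ 4`, `cp(T(v)) = v` and `cp^{(v−1)}(T(v)) = v`; the
cliques `Q_i = {pairs containing i}`, `i = 1,…,v`, form a minimum clique partition. -/
theorem cp_triangularGraph (v : ℕ) (hv : 4 ≤ v)
    (Q : Fin v → Finset {s : Finset (Fin v) // s.card = 2})
    (hQ : ∀ i : Fin v, Q i = Finset.univ.filter
      (fun s : {s : Finset (Fin v) // s.card = 2} => i ∈ (s : Finset (Fin v)))) :
    cp (triangularGraph v) = v ∧ cpT (triangularGraph v) (v - 1) = v ∧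
      IsCliquePartition (triangularGraph v) (Finset.univ.image Q) ∧
      (Finset.univ.image Q).card = v := by
  
  classical
  have hmemQ : ∀ (i : Fin v) (s : {s : Finset (Fin v) // s.card = 2}),
      s ∈ Q i ↔ i ∈ (s : Finset (Fin v)) := by
    intro i s
    rw [hQ i]
    simp
  have hclique : ∀ i, (triangularGraph v).IsClique ((Q i : Finset _) : Set _) := by
    intro i a ha b hb hab
    refine ⟨hab, i, ?_⟩
    rw [Finset.mem_inter]
    exact ⟨(hmemQ i a).mp (Finset.mem_coe.mp ha), (hmemQ i b).mp (Finset.mem_coe.mp hb)⟩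
  have hpart : IsCliquePartition (triangularGraph v) (Finset.univ.image Q) := by
    constructor
    · intro s hs
      obtain ⟨i, -, rfl⟩ := Finset.mem_image.mp hs
      exact hclique i
    · intro a b hadj
      obtain ⟨hne, x, hx⟩ := hadj
      rw [Finset.mem_inter] at hx
      refine ⟨Q x, ⟨Finset.mem_image_of_mem Q (Finset.mem_univ x),
        (hmemQ x a).mpr hx.1, (hmemQ x b).mpr hx.2⟩, ?_⟩
      rintro s ⟨hs, haS, hbS⟩
      obtain ⟨j, -, rfl⟩ := Finset.mem_image.mp hs
      have hja : j ∈ (a : Finset (Fin v)) := (hmemQ j a).mp haS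
      have hjb : j ∈ (b : Finset (Fin v)) := (hmemQ j b).mp hbS
      have hjx : j = x := by
        by_contra hjx
        have hsub : ∀ (c : {s : Finset (Fin v) // s.card = 2}), j ∈ (c : Finset (Fin v)) →
            x ∈ (c : Finset (Fin v)) → (c : Finset (Fin v)) = {j, x} := by
          intro c hjc hxc
          refine (Finset.eq_of_subset_of_card_le ?_ ?_).symm
          · intro u hu
            rcases Finset.mem_insert.mp hu with rfl | h2
            · exact hjc
            · rw [Finset.mem_singleton.mp h2]; exact hxc
          · rw [c.2, Finset.card_pair hjx]
        exact hne (Subtype.ext ((hsub a hja hx.1).trans (hsub b hjb hx.2).symm))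
      rw [hjx]
  have hQinj : Function.Injective Q := by
    intro i j hij
    by_contra hne
    have hnonem : ((Finset.univ : Finset (Fin v)) \ {i, j}).Nonempty := by
      rw [← Finset.card_pos, Finset.card_sdiff_of_subset (Finset.subset_univ _), Finset.card_univ,
        Fintype.card_fin]
      have h2 : ({i, j} : Finset (Fin v)).card ≤ 2 :=
        (Finset.card_insert_le _ _).trans (by simp)
      omega
    obtain ⟨k, hk⟩ := hnonem
    rw [Finset.mem_sdiff] at hk
    simp only [Finset.mem_insert, Finset.mem_singleton, not_or] at hk
    obtain ⟨-, hki, hkj⟩ := hk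
    have hik : i ≠ k := fun h => hki h.symm
    set s : {s : Finset (Fin v) // s.card = 2} :=
      ⟨({i, k} : Finset (Fin v)), Finset.card_pair hik⟩ with hs
    have h1 : s ∈ Q i := (hmemQ i s).mpr (Finset.mem_insert_self i _)
    rw [hij] at h1
    have h2 := (hmemQ j s).mp h1
    rcases Finset.mem_insert.mp h2 with h3 | h3
    · exact hne h3.symm
    · exact hkj (Finset.mem_singleton.mp h3).symm
  have himgcard : (Finset.univ.image Q).card = v := by
    rw [Finset.card_image_of_injective _ hQinj, Finset.card_univ, Fintype.card_fin]
  have hQcard : ∀ i, (Q i).card = v - 1 := by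
    intro i
    have hbij : (Finset.univ.erase i).card = (Q i).card := by
      refine Finset.card_bij (fun j hj => (⟨({i, j} : Finset (Fin v)),
        Finset.card_pair (Finset.ne_of_mem_erase hj).symm⟩ :
          {s : Finset (Fin v) // s.card = 2})) ?_ ?_ ?_
      · intro j hj
        exact (hmemQ i _).mpr (Finset.mem_insert_self i _)
      · intro j hj j' hj' h
        have hval : ({i, j} : Finset (Fin v)) = {i, j'} := congrArg Subtype.val h
        have : j ∈ ({i, j'} : Finset (Fin v)) :=
          hval ▸ Finset.mem_insert_of_mem (Finset.mem_singleton_self j)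
        rcases Finset.mem_insert.mp this with h3 | h3
        · exact absurd h3 (Finset.ne_of_mem_erase hj)
        · exact Finset.mem_singleton.mp h3
      · intro s hs
        obtain ⟨y, hyi, hsy⟩ := pair_decomp s.2 ((hmemQ i s).mp hs)
        exact ⟨y, Finset.mem_erase.mpr ⟨hyi, Finset.mem_univ y⟩, Subtype.ext hsy.symm⟩
    rw [← hbij, Finset.card_erase_of_mem (Finset.mem_univ i), Finset.card_univ,
      Fintype.card_fin]
  have hQoff : ∀ i, (Q i).offDiag.card = (v - 1) * (v - 2) := by
    intro i
    rw [offDiag_card_eq, hQcard i, Nat.sub_sub]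
  have hsumQ : ∑ s ∈ Finset.univ.image Q, s.offDiag.card = v * ((v - 1) * (v - 2)) := by
    rw [Finset.sum_image (fun i _ j _ h => hQinj h)]
    calc ∑ i : Fin v, (Q i).offDiag.card = ∑ _i : Fin v, (v - 1) * (v - 2) :=
          Finset.sum_congr rfl (fun i _ => hQoff i)
      _ = v * ((v - 1) * (v - 2)) := by
          rw [Finset.sum_const, Finset.card_univ, Fintype.card_fin, smul_eq_mul]
  have hlow : ∀ P : Finset (Finset {s : Finset (Fin v) // s.card = 2}),
      IsCliquePartition (triangularGraph v) P → v ≤ P.card := by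
    intro P hP
    have hsum := cliquePartition_sum_offDiag (triangularGraph v) hP hpart
    rw [hsumQ] at hsum
    have hbound : ∑ s ∈ P, s.offDiag.card ≤ P.card * ((v - 1) * (v - 2)) := by
      rw [← smul_eq_mul]
      refine Finset.sum_le_card_nsmul P _ _ ?_
      intro s hs
      rw [offDiag_card_eq]
      have hcard : s.card ≤ v - 1 := triangular_clique_card_le v hv s (hP.1 s hs)
      exact Nat.mul_le_mul hcard (by omega)
    rw [hsum] at hbound
    have hpos : 0 < (v - 1) * (v - 2) := Nat.mul_pos (by omega) (by omega)
    exact Nat.le_of_mul_le_mul_right hbound hpos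
  refine ⟨?_, ?_, hpart, himgcard⟩
  · unfold cp
    apply le_antisymm
    · exact Nat.sInf_le ⟨Finset.univ.image Q, hpart, himgcard⟩
    · refine le_csInf ⟨v, Finset.univ.image Q, hpart, himgcard⟩ ?_
      rintro m ⟨P, hP, rfl⟩
      exact hlow P hP
  · unfold cpT
    apply le_antisymm
    · refine Nat.sInf_le ⟨Finset.univ.image Q, hpart, ?_, himgcard⟩
      intro s hs
      obtain ⟨i, -, rfl⟩ := Finset.mem_image.mp hs
      exact le_of_eq (hQcard i)
    · refine le_csInf ⟨v, Finset.univ.image Q, hpart, ?_, himgcard⟩ ?_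
      · intro s hs
        obtain ⟨i, -, rfl⟩ := Finset.mem_image.mp hs
        exact le_of_eq (hQcard i)
      · rintro m ⟨P, hP, -, rfl⟩
        exact hlow P hP
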